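/- In the rank comparison lemma with β = 0: if f·g = α·g + γ as formal power series, f(0) ≠ α, and g(0) ≠ 0, then for every d ∈ ℕ, rank(H[f]^{(d,d)}) ≥ rank(H[g]^{(d,d)}) − 2. -/

import Mathlib

open Matrix Finset

private lemma aux_rank_add_le {n : Type*} [Fintype n] [DecidableEq n]
    (A B : Matrix n n ℝ) : (A + B).rank ≤ A.rank + B.rank := by
  classical
  have h : LinearMap.range (A + B).mulVecLin ≤
      LinearMap.range A.mulVecLin ⊔ LinearMap.range B.mulVecLin := by
    rintro x ⟨v, rfl⟩
    rw [Matrix.mulVecLin_add]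
    exact Submodule.mem_sup.2 ⟨_, ⟨v, rfl⟩, _, ⟨v, rfl⟩, rfl⟩
  have h1 : (A + B).rank ≤ Module.finrank ℝ
      (LinearMap.range A.mulVecLin ⊔ LinearMap.range B.mulVecLin : Submodule ℝ (n → ℝ)) :=
    Submodule.finrank_mono h
  exact h1.trans (Submodule.finrank_add_le_finrank_add_finrank _ _)

private lemma aux_rank_neg {n : Type*} [Fintype n] [DecidableEq n]
    (A : Matrix n n ℝ) : (-A).rank = A.rank := by
  have : (-A).mulVecLin = -(A.mulVecLin) := by
    ext v
    simp [Matrix.neg_mulVec]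
  rw [Matrix.rank, this, LinearMap.range_neg, ← Matrix.rank]

private lemma aux_rank_vecMulVec_le {n : Type*} [Fintype n] [DecidableEq n]
    (v w : n → ℝ) : (Matrix.vecMulVec v w).rank ≤ 1 := by
  rw [Matrix.vecMulVec_eq (Fin 1)]
  have h1 : (Matrix.replicateCol (Fin 1) v * Matrix.replicateRow (Fin 1) w).rank ≤ (Matrix.replicateCol (Fin 1) v).rank :=
    Matrix.rank_mul_le_left _ _
  have h2 : (Matrix.replicateCol (Fin 1) v).rank ≤ Fintype.card (Fin 1) := Matrix.rank_le_card_width _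
  exact (h1.trans h2).trans_eq (Fintype.card_fin 1)

/-- The `(d+1)×(d+1)` Hankel matrix of the coefficients of a power series. -/
noncomputable def hankel (d : ℕ) (h : PowerSeries ℝ) : Matrix (Fin (d + 1)) (Fin (d + 1)) ℝ :=
  Matrix.of fun i j => PowerSeries.coeff ((i : ℕ) + j) h

/-- Rank comparison with `β = 0`: if `f·g = α·g + γ`, `f(0) ≠ α` and `g(0) ≠ 0`,
then `rank(H[f]^{(d,d)}) ≥ rank(H[g]^{(d,d)}) − 2`. -/
theorem hankel_rank_comparison_beta_zero (f g : PowerSeries ℝ) (α γ : ℝ)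
    (hf : PowerSeries.coeff 0 f ≠ α) (hg : PowerSeries.coeff 0 g ≠ 0)
    (heq : f * g = PowerSeries.C α * g + PowerSeries.C γ) (d : ℕ) :
    (hankel d g).rank ≤ (hankel d f).rank + 2 := by
  classical
  set u : PowerSeries ℝ := f - PowerSeries.C α with hu
  have hu0 : PowerSeries.coeff 0 u ≠ 0 := by
    simp only [hu, map_sub, PowerSeries.coeff_zero_C]
    exact sub_ne_zero.mpr hf
  have hug : u * g = PowerSeries.C γ := by
    rw [hu, sub_mul, heq]; ring
  have huk : ∀ k : ℕ, k ≠ 0 → PowerSeries.coeff k u = PowerSeries.coeff k f := by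
    intro k hk
    simp [hu, PowerSeries.coeff_C, hk]
  let L : Matrix (Fin (d+1)) (Fin (d+1)) ℝ :=
    Matrix.of fun i k => if (k:ℕ) ≤ (i:ℕ) then PowerSeries.coeff ((i:ℕ) - (k:ℕ)) u else 0
  let N : Matrix (Fin (d+1)) (Fin (d+1)) ℝ :=
    Matrix.of fun i j => PowerSeries.coeff ((i:ℕ) + (j:ℕ) + 1) f
  let U : Matrix (Fin (d+1)) (Fin (d+1)) ℝ :=
    Matrix.of fun m j => if (m:ℕ) < (j:ℕ) then PowerSeries.coeff ((j:ℕ) - 1 - (m:ℕ)) g else 0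
  let Cm : Matrix (Fin (d+1)) (Fin (d+1)) ℝ :=
    Matrix.vecMulVec (fun i : Fin (d+1) => if (i:ℕ) = 0 then γ else 0)
      (fun j : Fin (d+1) => if (j:ℕ) = 0 then 1 else 0)
  have key : L * hankel d g + N * U = Cm := by
    ext i j
    let T : ℕ → ℝ := fun p =>
      PowerSeries.coeff p u * PowerSeries.coeff ((i:ℕ)+(j:ℕ)-p) g
    have hLg : (L * hankel d g) i j = ∑ p ∈ Finset.range ((i:ℕ)+1), T p := by
      have hfin : (L * hankel d g) i j = ∑ k ∈ Finset.range (d+1),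
          (if k ≤ (i:ℕ) then
            PowerSeries.coeff ((i:ℕ)-k) u * PowerSeries.coeff (k+(j:ℕ)) g else 0) := by
        rw [Matrix.mul_apply, ← Fin.sum_univ_eq_sum_range]
        refine Finset.sum_congr rfl fun k _ => ?_
        simp only [L, hankel, Matrix.of_apply]
        split_ifs <;> simp
      rw [hfin]
      rw [← Finset.sum_subset (Finset.range_subset_range.2 (Nat.succ_le_succ i.is_le))
        (by intro k _ hk; rw [if_neg]; simp only [Finset.mem_range] at hk; omega)]
      rw [← Finset.sum_range_reflect T ((i:ℕ)+1)]
      refine Finset.sum_congr rfl fun k hk => ?_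
      have hk' : k ≤ (i:ℕ) := Nat.lt_succ_iff.1 (Finset.mem_range.1 hk)
      rw [if_pos hk']
      simp only [T]
      have e1 : (i:ℕ)+1-1-k = (i:ℕ)-k := by omega
      have e2 : (i:ℕ)+(j:ℕ)-((i:ℕ)-k) = k+(j:ℕ) := by omega
      rw [e1, e2]
    have hNU : (N * U) i j = ∑ p ∈ Finset.Ico ((i:ℕ)+1) ((i:ℕ)+(j:ℕ)+1), T p := by
      have hfin : (N * U) i j = ∑ k ∈ Finset.range (d+1),
          (if k < (j:ℕ) then
            PowerSeries.coeff ((i:ℕ)+k+1) f * PowerSeries.coeff ((j:ℕ)-1-k) g else 0) := by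
        rw [Matrix.mul_apply, ← Fin.sum_univ_eq_sum_range]
        refine Finset.sum_congr rfl fun k _ => ?_
        simp only [N, U, Matrix.of_apply]
        split_ifs <;> simp
      rw [hfin, Finset.sum_Ico_eq_sum_range]
      have hj : (i:ℕ)+(j:ℕ)+1 - ((i:ℕ)+1) = (j:ℕ) := by omega
      rw [hj]
      rw [← Finset.sum_subset (Finset.range_subset_range.2 (Nat.le_succ_of_le j.is_le))
        (by intro k _ hk; rw [if_neg]; simp only [Finset.mem_range] at hk; omega)]
      refine Finset.sum_congr rfl fun k hk => ?_
      have hk' : k < (j:ℕ) := Finset.mem_range.1 hk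
      rw [if_pos hk']
      simp only [T]
      have e1 : (i:ℕ)+1+k = (i:ℕ)+k+1 := by omega
      have e2 : (i:ℕ)+(j:ℕ)-((i:ℕ)+k+1) = (j:ℕ)-1-k := by omega
      rw [e1, e2, huk _ (by omega)]
    have hsum : ∑ p ∈ Finset.range ((i:ℕ)+1), T p
        + ∑ p ∈ Finset.Ico ((i:ℕ)+1) ((i:ℕ)+(j:ℕ)+1), T p
        = ∑ p ∈ Finset.range ((i:ℕ)+(j:ℕ)+1), T p := by
      rw [Finset.range_eq_Ico, Finset.range_eq_Ico]
      exact Finset.sum_Ico_consecutive T (by omega : 0 ≤ (i:ℕ)+1) (by omega : (i:ℕ)+1 ≤ (i:ℕ)+(j:ℕ)+1)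
    have hC : ∑ p ∈ Finset.range ((i:ℕ)+(j:ℕ)+1), T p
        = if (i:ℕ)+(j:ℕ) = 0 then γ else 0 := by
      have h1 : ∑ p ∈ Finset.HasAntidiagonal.antidiagonal ((i:ℕ)+(j:ℕ)),
          PowerSeries.coeff p.1 u * PowerSeries.coeff p.2 g
          = ∑ p ∈ Finset.range ((i:ℕ)+(j:ℕ)+1), T p :=
        Finset.Nat.sum_antidiagonal_eq_sum_range_succ
          (fun a b => PowerSeries.coeff a u * PowerSeries.coeff b g) ((i:ℕ)+(j:ℕ))
      rw [← h1, ← PowerSeries.coeff_mul, hug, PowerSeries.coeff_C]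
    rw [Matrix.add_apply, hLg, hNU, hsum, hC]
    simp only [Cm, Matrix.vecMulVec_apply]
    by_cases hij : (i:ℕ) + (j:ℕ) = 0
    · have hi : (i:ℕ) = 0 := by omega
      have hj : (j:ℕ) = 0 := by omega
      rw [if_pos hij, if_pos hi, if_pos hj, mul_one]
    · rw [if_neg hij]
      by_cases hi : (i:ℕ) = 0
      · rw [if_pos hi, if_neg (by omega), mul_zero]
      · rw [if_neg hi, zero_mul]
  have hdetL : IsUnit L.det := by
    have ht : L.BlockTriangular OrderDual.toDual := by
      intro i j hij
      have hij' : (i:ℕ) < (j:ℕ) := hij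
      simp only [L, Matrix.of_apply]
      rw [if_neg (by omega)]
    rw [Matrix.det_of_lowerTriangular L ht]
    have hdiag : ∀ i : Fin (d+1), L i i = PowerSeries.coeff 0 u := by
      intro i; simp [L]
    rw [Finset.prod_congr rfl (fun i _ => hdiag i), Finset.prod_const]
    exact isUnit_iff_ne_zero.2 (pow_ne_zero _ hu0)
  have r1 : (hankel d g).rank = (L * hankel d g).rank :=
    (Matrix.rank_mul_eq_right_of_isUnit_det L _ hdetL).symm
  have hLHg : L * hankel d g = Cm + -(N * U) := by
    rw [← key]; abel
  have r2 : (L * hankel d g).rank ≤ Cm.rank + (N * U).rank := by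
    rw [hLHg]
    exact (aux_rank_add_le _ _).trans (by rw [aux_rank_neg])
  have r3 : Cm.rank ≤ 1 := aux_rank_vecMulVec_le _ _
  have r4 : (N * U).rank ≤ N.rank := Matrix.rank_mul_le_left _ _
  let S : Matrix (Fin (d+1)) (Fin (d+1)) ℝ :=
    Matrix.of fun i k => if (i:ℕ)+1 = (k:ℕ) then 1 else 0
  let B : Matrix (Fin (d+1)) (Fin (d+1)) ℝ :=
    Matrix.vecMulVec (fun i : Fin (d+1) => if (i:ℕ) = d then 1 else 0)
      (fun j : Fin (d+1) => PowerSeries.coeff (d + (j:ℕ) + 1) f)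
  have hN : N = S * hankel d f + B := by
    ext i j
    have hfin : (S * hankel d f) i j = ∑ k ∈ Finset.range (d+1),
        (if (i:ℕ)+1 = k then PowerSeries.coeff (k+(j:ℕ)) f else 0) := by
      rw [Matrix.mul_apply, ← Fin.sum_univ_eq_sum_range]
      refine Finset.sum_congr rfl fun k _ => ?_
      simp only [S, hankel, Matrix.of_apply]
      split_ifs <;> simp
    rw [Matrix.add_apply, hfin, Finset.sum_ite_eq]
    simp only [N, B, Matrix.of_apply, Matrix.vecMulVec_apply, Finset.mem_range]
    by_cases hi : (i:ℕ) = d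
    · rw [if_neg (by omega), if_pos hi]
      have e : (i:ℕ)+(j:ℕ)+1 = d+(j:ℕ)+1 := by omega
      rw [e]; ring
    · rw [if_pos (by have := i.is_le; omega), if_neg hi]
      have e : (i:ℕ)+1+(j:ℕ) = (i:ℕ)+(j:ℕ)+1 := by omega
      rw [e]; ring
  have r5 : N.rank ≤ (hankel d f).rank + 1 := by
    rw [hN]
    exact (aux_rank_add_le _ _).trans
      (add_le_add (Matrix.rank_mul_le_right _ _) (aux_rank_vecMulVec_le _ _))
  omega
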